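/- Let a ∈ ℂ and let (x_n) satisfy x_{n+2} = a·x_{n+1} − x_n, and let (u_n) satisfy the same recurrence with u_0 = 0, u_1 = 1. Then for every odd positive integer n, x_0 + x_1 + ... + x_{n-1} = (u_{(n+1)/2} + u_{(n-1)/2}) · x_{(n-1)/2}. -/
import Mathlib


theorem sum_chebyshev_like (a : ℂ) (x u : ℕ → ℂ)
    (hx : ∀ n, x (n + 2) = a * x (n + 1) - x n)
    (hu0 : u 0 = 0) (hu1 : u 1 = 1)
    (hu : ∀ n, u (n + 2) = a * u (n + 1) - u n)
    (n : ℕ) (hn : 0 < n) (hodd : Odd n) :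
    (∑ k ∈ Finset.range n, x k) = (u ((n + 1) / 2) + u ((n - 1) / 2)) * x ((n - 1) / 2) := by
  have hu2 : u 2 = a := by have := hu 0; rw [hu0, hu1] at this; simpa using this
  have key : ∀ k m, x (m + k + 1) = u (k + 1) * x (m + 1) - u k * x m := by
    intro k
    induction k using Nat.twoStepInduction with
    | zero => intro m; simp [hu0, hu1]
    | one =>
      intro m
      have := hx m
      rw [show m + 1 + 1 = m + 2 from rfl, this, hu2, hu1]
      ring
    | more k ih1 ih2 =>
      intro m
      have e1 := ih1 m
      have e2 := ih2 m
      have h3 := hx (m + k + 1)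
      rw [show m + k + 1 + 2 = m + (k + 2) + 1 from by ring,
        show m + k + 1 + 1 = m + (k + 1) + 1 from by ring] at h3
      rw [h3, e1, e2, hu (k + 1), hu k]
      ring
  obtain ⟨m, rfl⟩ := hodd
  have h1 : (2 * m + 1 + 1) / 2 = m + 1 := by omega
  have h2 : (2 * m + 1 - 1) / 2 = m := by omega
  rw [h1, h2]
  clear hn h1 h2
  induction m with
  | zero => simp [hu0, hu1]
  | succ m ih =>
    rw [show 2 * (m + 1) + 1 = (2 * m + 1 + 1) + 1 from by ring,
      Finset.sum_range_succ, Finset.sum_range_succ, ih,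
      show 2 * m + 1 = m + m + 1 from by ring, key m m,
      show 2 * m + 1 + 1 = m + (m + 1) + 1 from by ring, key (m + 1) m,
      hu m]
    ring
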